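/- Let f, g : {-1,1}^n → {-1,1} be Boolean functions whose Fourier expansions have l₁ and l₂ nonzero terms respectively, let t ∈ {1,...,n} with Inf_t[f] ≤ ε, and write f(x) = x_t·q^f(x) + r^f(x) and g(x) = x_t·q^g(x) + r^g(x) with q^f, r^f, q^g, r^g multilinear polynomials not depending on x_t. Then the multilinear polynomial x_t·q^f(x)·r^g(x) satisfies Inf_t[x_t·q^f·r^g] ≤ l·ε, where l = l₁ l₂. -/

import Mathlib

open Finset

/-- The embedding of the Boolean cube `{-1,1}^n` into `ℝ^n`. -/
noncomputable def chi {n : ℕ} (x : Fin n → Bool) : Fin n → ℝ :=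
  fun i => if x i then 1 else -1

/-- Expectation of `f` over a uniformly random point of `{-1,1}^n`. -/
noncomputable def expect {n : ℕ} (f : (Fin n → Bool) → ℝ) : ℝ :=
  (∑ x : Fin n → Bool, f x) / 2 ^ n

/-- The Fourier coefficient `f̂(S) = E_x[f(x) ∏_{i ∈ S} x_i]`. -/
noncomputable def fhat {n : ℕ} (f : (Fin n → Bool) → ℝ) (S : Finset (Fin n)) : ℝ :=
  expect fun x => f x * ∏ i ∈ S, chi x i

/-- The influence of coordinate `t` on `f`: `Inf_t[f] = ∑_{S ∋ t} f̂(S)²`. -/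
noncomputable def influence {n : ℕ} (f : (Fin n → Bool) → ℝ) (t : Fin n) : ℝ :=
  ∑ S ∈ univ.filter (fun S : Finset (Fin n) => t ∈ S), (fhat f S) ^ 2

/-- The variance of `f` over a uniformly random point of `{-1,1}^n`:
`Var[f] = E[f²] - (E[f])²`. -/
noncomputable def variance {n : ℕ} (f : (Fin n → Bool) → ℝ) : ℝ :=
  expect (fun x => f x ^ 2) - (expect f) ^ 2

/-- The quotient part of the decomposition `h = x_t·q + r`:
`q(x) = ∑_{S ∋ t} ĥ(S) ∏_{i ∈ S, i ≠ t} x_i`. -/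
noncomputable def qpart {n : ℕ} (h : (Fin n → Bool) → ℝ) (t : Fin n) :
    (Fin n → Bool) → ℝ :=
  fun x => ∑ S ∈ univ.filter (fun S : Finset (Fin n) => t ∈ S),
    fhat h S * ∏ i ∈ S.erase t, chi x i

/-- The remainder part of the decomposition `h = x_t·q + r`:
`r(x) = ∑_{S ∌ t} ĥ(S) ∏_{i ∈ S} x_i`. -/
noncomputable def rpart {n : ℕ} (h : (Fin n → Bool) → ℝ) (t : Fin n) :
    (Fin n → Bool) → ℝ :=
  fun x => ∑ S ∈ univ.filter (fun S : Finset (Fin n) => t ∉ S),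
    fhat h S * ∏ i ∈ S, chi x i

lemma chi_mul_self {n : ℕ} (x : Fin n → Bool) (i : Fin n) : chi x i * chi x i = 1 := by
  unfold chi; split <;> norm_num

lemma prod_chi_mul {n : ℕ} (x : Fin n → Bool) (S T : Finset (Fin n)) :
    (∏ i ∈ S, chi x i) * ∏ i ∈ T, chi x i = ∏ i ∈ symmDiff S T, chi x i := by
  classical
  rw [← Finset.prod_union_inter]
  have hU : S ∪ T = symmDiff S T ∪ (S ∩ T) := by
    have := symmDiff_sup_inf S T
    simpa [Finset.sup_eq_union, Finset.inf_eq_inter] using this.symm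
  have hd : Disjoint (symmDiff S T) (S ∩ T) := by
    simpa [Finset.inf_eq_inter] using disjoint_symmDiff_inf S T
  rw [hU, Finset.prod_union hd, mul_assoc, ← Finset.prod_mul_distrib]
  have : ∏ i ∈ S ∩ T, chi x i * chi x i = 1 := by
    rw [Finset.prod_congr rfl (fun i _ => chi_mul_self x i), Finset.prod_const_one]
  rw [this, mul_one]

lemma sum_prod_chi {n : ℕ} (U : Finset (Fin n)) (hU : U.Nonempty) :
    ∑ x : Fin n → Bool, ∏ i ∈ U, chi x i = 0 := by
  classical
  obtain ⟨u, hu⟩ := hU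
  apply Finset.sum_involution (fun x _ => Function.update x u (!x u))
  · intro x _
    have h2 : ∀ i ∈ U.erase u, chi (Function.update x u (!x u)) i = chi x i := by
      intro i hi
      unfold chi
      rw [Function.update_of_ne (Finset.ne_of_mem_erase hi)]
    have h3 : chi (Function.update x u (!x u)) u = -chi x u := by
      unfold chi; rw [Function.update_self]; cases h : x u <;> simp [h]
    have hflip : ∏ i ∈ U, chi (Function.update x u (!x u)) i = -∏ i ∈ U, chi x i := by
      rw [← Finset.mul_prod_erase U (fun i => chi (Function.update x u (!x u)) i) hu,
        ← Finset.mul_prod_erase U (fun i => chi x i) hu,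
        Finset.prod_congr rfl h2, h3]
      ring
    rw [hflip]; ring
  · intro x _ _ hcontra
    have := congrFun hcontra u
    rw [Function.update_self] at this
    simp at this
  · intro x _
    funext i
    rcases eq_or_ne i u with rfl | hi
    · simp
    · simp [Function.update_of_ne hi]
  · intro x _; exact Finset.mem_univ _

lemma expect_prod_chi {n : ℕ} (U : Finset (Fin n)) :
    expect (fun x => ∏ i ∈ U, chi x i) = if U = ∅ then 1 else 0 := by
  rcases eq_or_ne U ∅ with rfl | h
  · simp only [Finset.prod_empty]
    unfold _root_.expect
    rw [Finset.sum_const, Finset.card_univ, Fintype.card_fun, Fintype.card_bool,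
      Fintype.card_fin, nsmul_eq_mul]
    push_cast
    field_simp
  · rw [if_neg h]
    unfold _root_.expect
    rw [sum_prod_chi U (Finset.nonempty_iff_ne_empty.mpr h), zero_div]

lemma fhat_chi {n : ℕ} (S T : Finset (Fin n)) :
    fhat (fun x => ∏ i ∈ S, chi x i) T = if S = T then 1 else 0 := by
  unfold fhat
  have h : (fun x : Fin n → Bool => (∏ i ∈ S, chi x i) * ∏ i ∈ T, chi x i)
      = fun x => ∏ i ∈ symmDiff S T, chi x i := funext fun x => prod_chi_mul x S T
  rw [h, expect_prod_chi]
  congr 1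
  simp [← Finset.bot_eq_empty, symmDiff_eq_bot]

lemma expect_sum {n : ℕ} {ι : Type*} (s : Finset ι) (F : ι → (Fin n → Bool) → ℝ) :
    expect (fun x => ∑ j ∈ s, F j x) = ∑ j ∈ s, expect (F j) := by
  unfold _root_.expect
  rw [Finset.sum_comm, ← Finset.sum_div]

lemma fhat_sum {n : ℕ} {ι : Type*} (s : Finset ι) (F : ι → (Fin n → Bool) → ℝ)
    (T : Finset (Fin n)) :
    fhat (fun x => ∑ j ∈ s, F j x) T = ∑ j ∈ s, fhat (F j) T := by
  unfold fhat
  have h : (fun x : Fin n → Bool => (∑ j ∈ s, F j x) * ∏ i ∈ T, chi x i)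
      = fun x => ∑ j ∈ s, F j x * ∏ i ∈ T, chi x i := by
    funext x; rw [Finset.sum_mul]
  rw [h, expect_sum]

lemma fhat_const_mul {n : ℕ} (c : ℝ) (F : (Fin n → Bool) → ℝ) (T : Finset (Fin n)) :
    fhat (fun x => c * F x) T = c * fhat F T := by
  unfold fhat _root_.expect
  have h : ∑ x : Fin n → Bool, c * F x * ∏ i ∈ T, chi x i
      = c * ∑ x : Fin n → Bool, F x * ∏ i ∈ T, chi x i := by
    rw [Finset.mul_sum]
    exact Finset.sum_congr rfl fun x _ => by ring
  simp only
  rw [h, mul_div_assoc]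

lemma sum_chi_chi {n : ℕ} (x y : Fin n → Bool) :
    ∑ S : Finset (Fin n), (∏ i ∈ S, chi x i) * ∏ i ∈ S, chi y i
      = if x = y then (2:ℝ)^n else 0 := by
  classical
  have h1 : ∀ S : Finset (Fin n), (∏ i ∈ S, chi x i) * ∏ i ∈ S, chi y i
      = ∏ i ∈ S, (chi x i * chi y i) := fun S => (Finset.prod_mul_distrib).symm
  simp_rw [h1]
  rw [← Finset.powerset_univ]
  have h2 := Finset.prod_add (fun i => chi x i * chi y i) (fun _ => (1:ℝ)) Finset.univ
  simp only [Finset.prod_const_one, mul_one] at h2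
  rw [← h2]
  rcases eq_or_ne x y with rfl | h
  · rw [if_pos rfl, Finset.prod_congr rfl (fun i _ => by rw [chi_mul_self]; norm_num : ∀ i ∈ univ, chi x i * chi x i + 1 = (2:ℝ))]
    simp
  · rw [if_neg h]
    obtain ⟨i, hi⟩ : ∃ i, x i ≠ y i := by
      by_contra hc; push_neg at hc; exact h (funext hc)
    apply Finset.prod_eq_zero (Finset.mem_univ i)
    unfold chi
    cases hx : x i <;> cases hy : y i <;> simp_all

lemma parseval {n : ℕ} (g : (Fin n → Bool) → ℝ) :
    ∑ S : Finset (Fin n), fhat g S ^ 2 = expect fun x => g x ^ 2 := by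
  classical
  have hN : ((2:ℝ)^n) ≠ 0 := by positivity
  have key : ∀ S : Finset (Fin n), fhat g S ^ 2
      = (∑ x : Fin n → Bool, ∑ y : Fin n → Bool,
          g x * g y * ((∏ i ∈ S, chi x i) * ∏ i ∈ S, chi y i)) / ((2:ℝ)^n * 2^n) := by
    intro S
    unfold fhat _root_.expect
    rw [sq, div_mul_div_comm, Finset.sum_mul_sum]
    congr 1
    apply Finset.sum_congr rfl; intro x _
    apply Finset.sum_congr rfl; intro y _
    ring
  simp_rw [key]
  rw [← Finset.sum_div]
  rw [Finset.sum_comm]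
  have h3 : ∀ x : Fin n → Bool, ∑ S : Finset (Fin n), ∑ y : Fin n → Bool,
      g x * g y * ((∏ i ∈ S, chi x i) * ∏ i ∈ S, chi y i) = g x * g x * 2^n := by
    intro x
    rw [Finset.sum_comm]
    have h4 : ∀ y : Fin n → Bool, ∑ S : Finset (Fin n),
        g x * g y * ((∏ i ∈ S, chi x i) * ∏ i ∈ S, chi y i)
        = if x = y then g x * g y * 2^n else 0 := by
      intro y
      rw [← Finset.mul_sum, sum_chi_chi]
      split <;> simp
    simp_rw [h4]
    rw [Finset.sum_ite_eq Finset.univ x (fun y => g x * g y * 2^n)]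
    simp
  simp_rw [h3]
  unfold _root_.expect
  rw [← Finset.sum_mul]
  field_simp

lemma my_expect_const {n : ℕ} (c : ℝ) : _root_.expect (fun _ : Fin n → Bool => c) = c := by
  unfold _root_.expect
  rw [Finset.sum_const, Finset.card_univ, Fintype.card_fun, Fintype.card_bool,
    Fintype.card_fin, nsmul_eq_mul]
  push_cast
  field_simp


/-- If `f, g : {-1,1}^n → {-1,1}` have `l₁` and `l₂` nonzero Fourier terms and
`Inf_t[f] ≤ ε`, then writing `f = x_t·q^f + r^f` and `g = x_t·q^g + r^g`, the
polynomial `x_t·q^f·r^g` satisfies `Inf_t[x_t·q^f·r^g] ≤ l ε` with `l = l₁ l₂`. -/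
theorem influence_cross_term_le (n : ℕ) (f g : (Fin n → Bool) → ℝ)
    (hfb : ∀ x, f x = 1 ∨ f x = -1) (hgb : ∀ x, g x = 1 ∨ g x = -1)
    (l₁ l₂ : ℕ)
    (hl₁ : (univ.filter fun S : Finset (Fin n) => fhat f S ≠ 0).card = l₁)
    (hl₂ : (univ.filter fun S : Finset (Fin n) => fhat g S ≠ 0).card = l₂)
    (t : Fin n) (ε : ℝ) (hε : 0 ≤ ε) (hf : influence f t ≤ ε) :
    influence (fun x => chi x t * qpart f t x * rpart g t x) t ≤ (l₁ * l₂ : ℕ) * ε := by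
  classical
  set A' := univ.filter (fun S : Finset (Fin n) => t ∈ S ∧ fhat f S ≠ 0) with hA'def
  set B' := univ.filter (fun S : Finset (Fin n) => t ∉ S ∧ fhat g S ≠ 0) with hB'def
  -- Representation of the cross term as a combination of characters
  have hrep : ∀ x, chi x t * qpart f t x * rpart g t x
      = ∑ p ∈ A' ×ˢ B', fhat f p.1 * fhat g p.2 * ∏ i ∈ symmDiff p.1 p.2, chi x i := by
    intro x
    have h1 : chi x t * qpart f t x
        = ∑ S ∈ univ.filter (fun S : Finset (Fin n) => t ∈ S),
            fhat f S * ∏ i ∈ S, chi x i := by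
      unfold qpart
      rw [Finset.mul_sum]
      apply Finset.sum_congr rfl
      intro S hS
      rw [Finset.mem_filter] at hS
      rw [← Finset.mul_prod_erase S (fun i => chi x i) hS.2]
      ring
    rw [h1]
    unfold rpart
    rw [Finset.sum_mul_sum]
    have h2 : ∀ S₁ ∈ univ.filter (fun S : Finset (Fin n) => t ∈ S),
        ∑ S₂ ∈ univ.filter (fun S : Finset (Fin n) => t ∉ S),
          (fhat f S₁ * ∏ i ∈ S₁, chi x i) * (fhat g S₂ * ∏ i ∈ S₂, chi x i)
        = ∑ S₂ ∈ univ.filter (fun S : Finset (Fin n) => t ∉ S),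
          fhat f S₁ * fhat g S₂ * ∏ i ∈ symmDiff S₁ S₂, chi x i := by
      intro S₁ _
      apply Finset.sum_congr rfl
      intro S₂ _
      rw [← prod_chi_mul x S₁ S₂]
      ring
    rw [Finset.sum_congr rfl h2, ← Finset.sum_product']
    symm
    apply Finset.sum_subset
    · apply Finset.product_subset_product <;>
        · intro S hS
          rw [Finset.mem_filter] at hS ⊢
          exact ⟨hS.1, hS.2.1⟩
    · intro p hp hnp
      rw [Finset.mem_product] at hp hnp
      have h0 : fhat f p.1 = 0 ∨ fhat g p.2 = 0 := by
        by_contra hc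
        push_neg at hc
        exact hnp ⟨Finset.mem_filter.mpr ⟨Finset.mem_univ _,
            (Finset.mem_filter.mp hp.1).2, hc.1⟩,
          Finset.mem_filter.mpr ⟨Finset.mem_univ _,
            (Finset.mem_filter.mp hp.2).2, hc.2⟩⟩
      rcases h0 with h0 | h0 <;> rw [h0] <;> ring
  -- Fourier coefficients of the cross term
  have hcoef : ∀ T, fhat (fun x => chi x t * qpart f t x * rpart g t x) T
      = ∑ p ∈ (A' ×ˢ B').filter (fun p => symmDiff p.1 p.2 = T),
          fhat f p.1 * fhat g p.2 := by
    intro T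
    have e1 : (fun x => chi x t * qpart f t x * rpart g t x)
        = fun x => ∑ p ∈ A' ×ˢ B',
            fhat f p.1 * fhat g p.2 * ∏ i ∈ symmDiff p.1 p.2, chi x i := funext hrep
    rw [e1, fhat_sum]
    have e2 : ∀ p ∈ A' ×ˢ B',
        fhat (fun x => fhat f p.1 * fhat g p.2 * ∏ i ∈ symmDiff p.1 p.2, chi x i) T
        = if symmDiff p.1 p.2 = T then fhat f p.1 * fhat g p.2 else 0 := by
      intro p _
      rw [fhat_const_mul (fhat f p.1 * fhat g p.2)
        (fun x => ∏ i ∈ symmDiff p.1 p.2, chi x i) T, fhat_chi]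
      split <;> ring
    rw [Finset.sum_congr rfl e2, Finset.sum_filter]
  -- fiber cardinality bound
  have card_bound : ∀ T : Finset (Fin n),
      ((A' ×ˢ B').filter (fun p => symmDiff p.1 p.2 = T)).card ≤ l₂ := by
    intro T
    rw [← hl₂]
    apply Finset.card_le_card_of_injOn (fun p => p.2)
    · intro p hp
      rw [Finset.mem_coe, Finset.mem_filter] at hp
      have h := (Finset.mem_product.mp hp.1).2
      rw [hB'def, Finset.mem_filter] at h
      exact Finset.mem_filter.mpr ⟨Finset.mem_univ _, h.2.2⟩
    · intro p hp q hq hpq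
      rw [Finset.mem_coe, Finset.mem_filter] at hp hq
      have ep : symmDiff T p.2 = p.1 := by
        rw [← hp.2]; exact symmDiff_symmDiff_cancel_right _ _
      have eq' : symmDiff T q.2 = q.1 := by
        rw [← hq.2]; exact symmDiff_symmDiff_cancel_right _ _
      have hpq' : p.2 = q.2 := hpq
      have h1 : p.1 = q.1 := by rw [← ep, ← eq', hpq']
      exact Prod.ext h1 hpq'

  -- main estimate
  have step1 : influence (fun x => chi x t * qpart f t x * rpart g t x) t
      ≤ ∑ T : Finset (Fin n),
          fhat (fun x => chi x t * qpart f t x * rpart g t x) T ^ 2 := by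
    unfold influence
    exact Finset.sum_le_sum_of_subset_of_nonneg (Finset.filter_subset _ _)
      (fun T _ _ => sq_nonneg _)
  have step2 : ∑ T : Finset (Fin n),
      fhat (fun x => chi x t * qpart f t x * rpart g t x) T ^ 2
      ≤ (l₂ : ℝ) * ∑ p ∈ A' ×ˢ B', (fhat f p.1 * fhat g p.2) ^ 2 := by
    calc ∑ T : Finset (Fin n),
        fhat (fun x => chi x t * qpart f t x * rpart g t x) T ^ 2
        = ∑ T : Finset (Fin n),
          (∑ p ∈ (A' ×ˢ B').filter (fun p => symmDiff p.1 p.2 = T),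
            fhat f p.1 * fhat g p.2) ^ 2 := by
          exact Finset.sum_congr rfl fun T _ => by rw [hcoef T]
      _ ≤ ∑ T : Finset (Fin n),
          (((A' ×ˢ B').filter (fun p => symmDiff p.1 p.2 = T)).card : ℝ) *
            ∑ p ∈ (A' ×ˢ B').filter (fun p => symmDiff p.1 p.2 = T),
              (fhat f p.1 * fhat g p.2) ^ 2 :=
          Finset.sum_le_sum fun T _ => sq_sum_le_card_mul_sum_sq
      _ ≤ ∑ T : Finset (Fin n), (l₂ : ℝ) *
            ∑ p ∈ (A' ×ˢ B').filter (fun p => symmDiff p.1 p.2 = T),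
              (fhat f p.1 * fhat g p.2) ^ 2 := by
          apply Finset.sum_le_sum
          intro T _
          apply mul_le_mul_of_nonneg_right
          · exact_mod_cast card_bound T
          · exact Finset.sum_nonneg fun p _ => sq_nonneg _
      _ = (l₂ : ℝ) * ∑ T : Finset (Fin n),
            ∑ p ∈ (A' ×ˢ B').filter (fun p => symmDiff p.1 p.2 = T),
              (fhat f p.1 * fhat g p.2) ^ 2 := (Finset.mul_sum _ _ _).symm
      _ = (l₂ : ℝ) * ∑ p ∈ A' ×ˢ B', (fhat f p.1 * fhat g p.2) ^ 2 := by
          rw [Finset.sum_fiberwise]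
  have split : ∑ p ∈ A' ×ˢ B', (fhat f p.1 * fhat g p.2) ^ 2
      = (∑ S ∈ A', fhat f S ^ 2) * (∑ S ∈ B', fhat g S ^ 2) := by
    rw [Finset.sum_product, Finset.sum_mul_sum]
    exact Finset.sum_congr rfl fun a _ => Finset.sum_congr rfl fun b _ => by ring
  have hA'le : ∑ S ∈ A', fhat f S ^ 2 ≤ ε := by
    refine le_trans ?_ hf
    unfold influence
    apply Finset.sum_le_sum_of_subset_of_nonneg
    · rw [hA'def]
      intro S hS
      rw [Finset.mem_filter] at hS ⊢
      exact ⟨hS.1, hS.2.1⟩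
    · intro S _ _
      exact sq_nonneg _
  have hB'le : ∑ S ∈ B', fhat g S ^ 2 ≤ 1 := by
    have hp := parseval g
    have hg1 : (fun x : Fin n → Bool => g x ^ 2) = fun _ => (1:ℝ) := by
      funext x
      rcases hgb x with h | h <;> rw [h] <;> norm_num
    have he : _root_.expect (fun x : Fin n → Bool => g x ^ 2) = 1 := by
      rw [hg1]; exact my_expect_const 1
    calc ∑ S ∈ B', fhat g S ^ 2
        ≤ ∑ S : Finset (Fin n), fhat g S ^ 2 :=
          Finset.sum_le_sum_of_subset_of_nonneg (Finset.subset_univ _)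
            (fun _ _ _ => sq_nonneg _)
      _ = 1 := by rw [hp, he]
  have hl1pos : 1 ≤ l₁ := by
    by_contra hc
    push_neg at hc
    have hl0 : l₁ = 0 := by omega
    rw [hl0, Finset.card_eq_zero] at hl₁
    have hall : ∀ S : Finset (Fin n), fhat f S = 0 := by
      intro S
      by_contra hS
      have hmem : S ∈ univ.filter (fun S : Finset (Fin n) => fhat f S ≠ 0) :=
        Finset.mem_filter.mpr ⟨Finset.mem_univ _, hS⟩
      rw [hl₁] at hmem
      exact absurd hmem (Finset.notMem_empty S)
    have hp := parseval f
    have hf1 : (fun x : Fin n → Bool => f x ^ 2) = fun _ => (1:ℝ) := by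
      funext x
      rcases hfb x with h | h <;> rw [h] <;> norm_num
    rw [Finset.sum_eq_zero (fun S _ => by rw [hall S]; ring), hf1, my_expect_const] at hp
    norm_num at hp
  have hsum_nonneg : 0 ≤ ∑ S ∈ B', fhat g S ^ 2 :=
    Finset.sum_nonneg fun _ _ => sq_nonneg _
  calc influence (fun x => chi x t * qpart f t x * rpart g t x) t
      ≤ (l₂ : ℝ) * ((∑ S ∈ A', fhat f S ^ 2) * (∑ S ∈ B', fhat g S ^ 2)) := by
        rw [← split]
        exact le_trans step1 step2
    _ ≤ (l₂ : ℝ) * (ε * 1) := by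
        apply mul_le_mul_of_nonneg_left _ (Nat.cast_nonneg _)
        exact mul_le_mul hA'le hB'le hsum_nonneg hε
    _ ≤ (l₁ * l₂ : ℕ) * ε := by
        push_cast
        rw [mul_one]
        have h1 : (1:ℝ) ≤ (l₁:ℝ) := by exact_mod_cast hl1pos
        nlinarith [mul_nonneg (mul_nonneg (sub_nonneg.mpr h1) (Nat.cast_nonneg (α := ℝ) l₂)) hε]
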